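/- Let B ≥ 1 be an integer, let L_1,…,L_B be positive reals, let 𝔸 and 𝔹 be arbitrary 2B×2B complex matrices, and let k ∈ ℂ. Then det( 𝔸·fromBlocks(0, I_B, sin(k𝕃), cos(k𝕃)) + k·𝔹·fromBlocks(I_B, 0, −cos(k𝕃), sin(k𝕃)) ) = det( 𝔸·fromBlocks(−sin(k𝕃/2), cos(k𝕃/2), sin(k𝕃/2), cos(k𝕃/2)) + k·𝔹·fromBlocks(cos(k𝕃/2), sin(k𝕃/2), −cos(k𝕃/2), sin(k𝕃/2)) ). -/
import Mathlib


open Matrix BigOperators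

section aux

variable {B : ℕ}

lemma diag_congr (f g : Fin B → ℂ) (h : ∀ b, f b = g b) :
    Matrix.diagonal f = Matrix.diagonal g :=
  congrArg Matrix.diagonal (funext h)

/-- determinant of a "rotation" block matrix with diagonal blocks is 1 -/
lemma det_rot_blocks (f : Fin B → ℂ) :
    (Matrix.fromBlocks (Matrix.diagonal fun b => Complex.cos (f b))
      (Matrix.diagonal fun b => Complex.sin (f b))
      (-(Matrix.diagonal fun b => Complex.sin (f b)))
      (Matrix.diagonal fun b => Complex.cos (f b))).det = 1 := by
  set P : Matrix (Fin B ⊕ Fin B) (Fin B ⊕ Fin B) ℂ :=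
    Matrix.fromBlocks 1 1 (Matrix.diagonal fun _ => Complex.I)
      (Matrix.diagonal fun _ => -Complex.I) with hP
  set D : Matrix (Fin B ⊕ Fin B) (Fin B ⊕ Fin B) ℂ :=
    Matrix.fromBlocks
      (Matrix.diagonal fun b => Complex.cos (f b) + Complex.I * Complex.sin (f b)) 0 0
      (Matrix.diagonal fun b => Complex.cos (f b) - Complex.I * Complex.sin (f b)) with hD
  have hPD : (Matrix.fromBlocks (Matrix.diagonal fun b => Complex.cos (f b))
      (Matrix.diagonal fun b => Complex.sin (f b))
      (-(Matrix.diagonal fun b => Complex.sin (f b)))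
      (Matrix.diagonal fun b => Complex.cos (f b))) * P = P * D := by
    rw [hP, hD, Matrix.fromBlocks_multiply, Matrix.fromBlocks_multiply]
    simp only [Matrix.diagonal_mul_diagonal, Matrix.mul_one, Matrix.one_mul,
      Matrix.mul_zero, Matrix.zero_mul, Matrix.neg_mul, Matrix.mul_neg, add_zero, zero_add,
      Matrix.diagonal_neg, Matrix.diagonal_add, neg_neg]
    rw [Matrix.fromBlocks_inj]
    refine ⟨?_, ?_, ?_, ?_⟩
    · exact diag_congr _ _ fun b => by ring
    · exact diag_congr _ _ fun b => by ring
    · exact diag_congr _ _ fun b => by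
        linear_combination (-Complex.sin (f b)) * Complex.I_sq
    · exact diag_congr _ _ fun b => by
        linear_combination (-Complex.sin (f b)) * Complex.I_sq
  have hdetP : P.det = (-2 * Complex.I) ^ B := by
    rw [hP, Matrix.det_fromBlocks_one₁₁, Matrix.mul_one, Matrix.diagonal_sub,
      Matrix.det_diagonal]
    rw [Finset.prod_congr rfl (fun b _ => show -Complex.I - Complex.I = -2 * Complex.I by ring),
      Finset.prod_const, Finset.card_univ, Fintype.card_fin]
  have hdetD : D.det = 1 := by
    rw [hD, Matrix.det_fromBlocks_zero₁₂, Matrix.det_diagonal, Matrix.det_diagonal,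
      ← Finset.prod_mul_distrib]
    refine Finset.prod_eq_one fun b _ => ?_
    have h1 := Complex.sin_sq_add_cos_sq (f b)
    linear_combination h1 - Complex.sin (f b) ^ 2 * Complex.I_sq
  have hPne : P.det ≠ 0 := by
    rw [hdetP]
    apply pow_ne_zero
    simp [Complex.I_ne_zero]
  have h2 := congrArg Matrix.det hPD
  rw [Matrix.det_mul, Matrix.det_mul, hdetD, mul_one] at h2
  exact mul_right_cancel₀ hPne (by rw [h2, one_mul])

end aux

/-- equivalence of two trigonometric forms of the secular determinant of a
quantum graph with `B` bonds of lengths `L b > 0`, vertex matching matrices `𝔸, 𝔹`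
(arbitrary `2B×2B` complex matrices) and spectral parameter `k ∈ ℂ`. -/
theorem secular_trig_forms (B : ℕ) (hB : 1 ≤ B) (L : Fin B → ℝ) (hL : ∀ b, 0 < L b)
    (𝔸 𝔹 : Matrix (Fin B ⊕ Fin B) (Fin B ⊕ Fin B) ℂ) (k : ℂ) :
    (𝔸 * Matrix.fromBlocks 0 1
        (Matrix.diagonal fun b => Complex.sin (k * L b))
        (Matrix.diagonal fun b => Complex.cos (k * L b))
      + k • (𝔹 * Matrix.fromBlocks 1 0
        (-(Matrix.diagonal fun b => Complex.cos (k * L b)))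
        (Matrix.diagonal fun b => Complex.sin (k * L b)))).det =
    (𝔸 * Matrix.fromBlocks
        (-(Matrix.diagonal fun b => Complex.sin (k * L b / 2)))
        (Matrix.diagonal fun b => Complex.cos (k * L b / 2))
        (Matrix.diagonal fun b => Complex.sin (k * L b / 2))
        (Matrix.diagonal fun b => Complex.cos (k * L b / 2))
      + k • (𝔹 * Matrix.fromBlocks
        (Matrix.diagonal fun b => Complex.cos (k * L b / 2))
        (Matrix.diagonal fun b => Complex.sin (k * L b / 2))
        (-(Matrix.diagonal fun b => Complex.cos (k * L b / 2)))
        (Matrix.diagonal fun b => Complex.sin (k * L b / 2)))).det := by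
  set c : Matrix (Fin B) (Fin B) ℂ := Matrix.diagonal fun b => Complex.cos (k * L b / 2) with hc
  set s : Matrix (Fin B) (Fin B) ℂ := Matrix.diagonal fun b => Complex.sin (k * L b / 2) with hs
  set S : Matrix (Fin B) (Fin B) ℂ := Matrix.diagonal fun b => Complex.sin (k * L b) with hS
  set C : Matrix (Fin B) (Fin B) ℂ := Matrix.diagonal fun b => Complex.cos (k * L b) with hC
  set R : Matrix (Fin B ⊕ Fin B) (Fin B ⊕ Fin B) ℂ := Matrix.fromBlocks c s (-s) c with hR
  -- trigonometric identities, entrywise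
  have hsin2 : ∀ b : Fin B, Complex.sin (k * L b) =
      2 * Complex.sin (k * L b / 2) * Complex.cos (k * L b / 2) := by
    intro b
    have h := Complex.sin_two_mul (k * L b / 2)
    rwa [show 2 * (k * (L b : ℂ) / 2) = k * L b by ring] at h
  have hcos2 : ∀ b : Fin B, Complex.cos (k * L b) =
      2 * Complex.cos (k * L b / 2) ^ 2 - 1 := by
    intro b
    have h := Complex.cos_two_mul (k * L b / 2)
    rwa [show 2 * (k * (L b : ℂ) / 2) = k * L b by ring] at h
  have hpyth : ∀ b : Fin B,
      Complex.sin (k * L b / 2) ^ 2 + Complex.cos (k * L b / 2) ^ 2 = 1 :=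
    fun b => Complex.sin_sq_add_cos_sq _
  have hM1 : (Matrix.fromBlocks 0 1 S C) * R = Matrix.fromBlocks (-s) c s c := by
    rw [hR, Matrix.fromBlocks_multiply]
    simp only [hc, hs, hS, hC, Matrix.diagonal_mul_diagonal, Matrix.mul_one, Matrix.one_mul,
      Matrix.mul_zero, Matrix.zero_mul, Matrix.mul_neg, Matrix.neg_mul, add_zero,
      zero_add, Matrix.diagonal_neg, Matrix.diagonal_add, neg_neg]
    rw [Matrix.fromBlocks_inj]
    refine ⟨rfl, rfl, ?_, ?_⟩
    · refine diag_congr _ _ fun b => ?_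
      rw [hsin2 b, hcos2 b]; ring
    · refine diag_congr _ _ fun b => ?_
      rw [hsin2 b, hcos2 b]
      linear_combination 2 * Complex.cos (k * (L b : ℂ) / 2) * hpyth b
  have hM2 : (Matrix.fromBlocks 1 0 (-C) S) * R = Matrix.fromBlocks c s (-c) s := by
    rw [hR, Matrix.fromBlocks_multiply]
    simp only [hc, hs, hS, hC, Matrix.diagonal_mul_diagonal, Matrix.mul_one, Matrix.one_mul,
      Matrix.mul_zero, Matrix.zero_mul, Matrix.mul_neg, Matrix.neg_mul, neg_neg,
      add_zero, zero_add, Matrix.diagonal_neg, Matrix.diagonal_add]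
    rw [Matrix.fromBlocks_inj]
    refine ⟨rfl, rfl, ?_, ?_⟩
    · refine diag_congr _ _ fun b => ?_
      rw [hsin2 b, hcos2 b]
      linear_combination (-2) * Complex.cos (k * (L b : ℂ) / 2) * hpyth b
    · refine diag_congr _ _ fun b => ?_
      rw [hsin2 b, hcos2 b]; ring
  have key : 𝔸 * Matrix.fromBlocks (-s) c s c
      + k • (𝔹 * Matrix.fromBlocks c s (-c) s)
      = (𝔸 * Matrix.fromBlocks 0 1 S C + k • (𝔹 * Matrix.fromBlocks 1 0 (-C) S)) * R := by
    rw [Matrix.add_mul, Matrix.smul_mul, Matrix.mul_assoc, Matrix.mul_assoc, hM1, hM2]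
  rw [key, Matrix.det_mul, hR, hc, hs, det_rot_blocks, mul_one]
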